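/- Every monic basic irreducible polynomial over Z/4Z is primary, i.e., the principal ideal it generates in Z4[x] is a primary ideal. -/

import Mathlib

open Polynomial

/-- Reduction mod 2 on coefficients, `ℤ/4 → ℤ/2`. -/
noncomputable def red2 : ZMod 4 →+* ZMod 2 := ZMod.castHom (show (2:ℕ) ∣ 4 by norm_num) (ZMod 2)

lemma red2_surjective : Function.Surjective red2 := by
  intro b; fin_cases b
  · exact ⟨0, (map_zero red2).trans rfl⟩
  · exact ⟨1, (map_one red2).trans rfl⟩

lemma red2_mul_eq_zero {x y : ZMod 4} (hx : red2 x = 0) (hy : red2 y = 0) : x * y = 0 := by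
  revert hx hy; revert x y; decide

lemma sq_eq_zero_of_map_red2_eq_zero {p : Polynomial (ZMod 4)} (hp : p.map red2 = 0) :
    p * p = 0 := by
  ext n
  rw [coeff_mul, coeff_zero]
  apply Finset.sum_eq_zero
  intro x _
  apply red2_mul_eq_zero
  · have := congrArg (fun q => Polynomial.coeff q x.1) hp
    simpa [Polynomial.coeff_map] using this
  · have := congrArg (fun q => Polynomial.coeff q x.2) hp
    simpa [Polynomial.coeff_map] using this

/-- Every monic basic irreducible polynomial over `ℤ/4` (i.e. a monic polynomial whose
mod-2 reduction is irreducible over `ℤ/2`) is primary: the principal ideal it generates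
in `(ℤ/4)[x]` is a primary ideal. -/
theorem basic_irreducible_is_primary (f : Polynomial (ZMod 4)) (hf : f.Monic)
    (hirr : Irreducible (f.map red2)) :
    (Ideal.span {f} : Ideal (Polynomial (ZMod 4))).IsPrimary := by
  have hsurj : Function.Surjective (Polynomial.mapRingHom red2) :=
    Polynomial.map_surjective red2 red2_surjective
  haveI hmax : (Ideal.span {f.map red2}).IsMaximal :=
    PrincipalIdealRing.isMaximal_of_irreducible hirr
  set M : Ideal (Polynomial (ZMod 4)) :=
    Ideal.comap (Polynomial.mapRingHom red2) (Ideal.span {f.map red2}) with hM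
  have hMmax : M.IsMaximal := Ideal.comap_isMaximal_of_surjective _ hsurj
  have hrad : (Ideal.span {f} : Ideal (Polynomial (ZMod 4))).radical = M := by
    apply le_antisymm
    · rw [hMmax.isPrime.isRadical.radical_le_iff]
      intro g hg
      rw [Ideal.mem_span_singleton] at hg
      obtain ⟨c, rfl⟩ := hg
      rw [hM, Ideal.mem_comap, map_mul]
      exact Ideal.mul_mem_right _ _ (Ideal.subset_span rfl)
    · intro g hg
      have hg' : f.map red2 ∣ g.map red2 := by
        rw [← Ideal.mem_span_singleton]
        exact hg
      obtain ⟨c, hc⟩ := hg'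
      obtain ⟨q, rfl⟩ := hsurj c
      have hp : (g - f * q).map red2 = 0 := by
        rw [Polynomial.map_sub, Polynomial.map_mul, hc, Polynomial.coe_mapRingHom]
        ring
      refine ⟨2, ?_⟩
      rw [Ideal.mem_span_singleton]
      refine ⟨f * q * q + 2 * q * (g - f * q), ?_⟩
      have h0 := sq_eq_zero_of_map_red2_eq_zero hp
      have : g ^ 2 = f * (f * q * q + 2 * q * (g - f * q)) + (g - f * q) * (g - f * q) := by
        ring
      rw [this, h0, add_zero]
  exact Ideal.isPrimary_of_isMaximal_radical (hrad ▸ hMmax)
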